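/- Let N ≥ 1 be an integer and k, ξ, ζ ≥ 0 reals with ξ ≥ 1 or ζ > 0, and define ℓ(σ) = τ + (k/(ξ+1))(σ+ζ)^{ξ+1} for some τ ≥ 0. Then the operator T : [0,1]^N → ℝ^N given by T(y)_i := ℓ(avg(y)) + (1/N)·y_i·ℓ'(avg(y)), with avg(y) := (1/N)Σ_j y_j and ℓ'(σ) = k(σ+ζ)^ξ, is Lipschitz continuous on [0,1]^N with Lipschitz constant L := (2k/N)·((1+N)(1+ζ)^ξ + ξ(1+ζ)^{ξ−1}), i.e., ‖T(x) − T(y)‖ ≤ L‖x − y‖ for all x, y ∈ [0,1]^N. -/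

import Mathlib

open Real in
private lemma mvt_rpow' {p a b M : ℝ} (hp : 0 ≤ p) (ha : 0 ≤ a) (hab : a ≤ b)
    (hM : ∀ u, a ≤ u → u ≤ b → p * u ^ (p - 1) ≤ M) :
    b ^ p - a ^ p ≤ M * (b - a) := by
  rcases eq_or_lt_of_le hab with rfl | hlt
  · simp
  have hcont : ContinuousOn (fun u : ℝ => u ^ p) (Set.Icc a b) := fun u hu =>
    (Real.continuousAt_rpow_const u p (Or.inr hp)).continuousWithinAt
  have hderiv : ∀ u ∈ Set.Ioo a b, HasDerivAt (fun u : ℝ => u ^ p) (p * u ^ (p - 1)) u :=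
    fun u hu => Real.hasDerivAt_rpow_const (Or.inl (ne_of_gt (lt_of_le_of_lt ha hu.1)))
  obtain ⟨c, hc, hceq⟩ := exists_hasDerivAt_eq_slope (fun u : ℝ => u ^ p)
    (fun u => p * u ^ (p - 1)) hlt hcont hderiv
  have h1 : b ^ p - a ^ p = (p * c ^ (p - 1)) * (b - a) := by
    rw [hceq, div_mul_cancel₀ _ (by linarith : b - a ≠ 0)]
  rw [h1]
  exact mul_le_mul_of_nonneg_right (hM c hc.1.le hc.2.le) (by linarith)

private lemma norm_decomp (N : ℕ) (A c2 c3 : ℝ) (hA : 0 ≤ A) (hc2 : 0 ≤ c2)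
    (hc3 : 0 ≤ c3) (d z y : Fin N → ℝ)
    (hd : ∀ i, d i = A + c2 * z i + c3 * y i) :
    Real.sqrt (∑ i, d i ^ 2) ≤ A * Real.sqrt N + c2 * Real.sqrt (∑ i, z i ^ 2)
      + c3 * Real.sqrt (∑ i, y i ^ 2) := by
  have hnorm : ∀ g : Fin N → ℝ, ‖(WithLp.equiv 2 (Fin N → ℝ)).symm g‖
      = Real.sqrt (∑ i, g i ^ 2) := by
    intro g
    rw [EuclideanSpace.norm_eq]
    simp [WithLp.equiv_symm_apply, PiLp.toLp_apply, sq_abs]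
  have hdecomp : (WithLp.equiv 2 (Fin N → ℝ)).symm d
      = A • (WithLp.equiv 2 (Fin N → ℝ)).symm (fun _ => 1)
      + c2 • (WithLp.equiv 2 (Fin N → ℝ)).symm z
      + c3 • (WithLp.equiv 2 (Fin N → ℝ)).symm y := by
    ext i
    simp only [PiLp.add_apply, PiLp.smul_apply, smul_eq_mul, WithLp.equiv_symm_apply, PiLp.toLp_apply]
    rw [hd i]
    ring
  have hone : ‖(WithLp.equiv 2 (Fin N → ℝ)).symm (fun _ => (1:ℝ))‖ = Real.sqrt N := by
    rw [hnorm]; simp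
  calc Real.sqrt (∑ i, d i ^ 2) = ‖(WithLp.equiv 2 (Fin N → ℝ)).symm d‖ := (hnorm d).symm
    _ ≤ ‖A • (WithLp.equiv 2 (Fin N → ℝ)).symm (fun _ => (1:ℝ))‖
        + ‖c2 • (WithLp.equiv 2 (Fin N → ℝ)).symm z‖
        + ‖c3 • (WithLp.equiv 2 (Fin N → ℝ)).symm y‖ := by
        rw [hdecomp]
        have h1 := norm_add_le (A • (WithLp.equiv 2 (Fin N → ℝ)).symm (fun _ => (1:ℝ))
          + c2 • (WithLp.equiv 2 (Fin N → ℝ)).symm z)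
          (c3 • (WithLp.equiv 2 (Fin N → ℝ)).symm y)
        have h2 := norm_add_le (A • (WithLp.equiv 2 (Fin N → ℝ)).symm (fun _ => (1:ℝ)))
          (c2 • (WithLp.equiv 2 (Fin N → ℝ)).symm z)
        linarith
    _ = A * Real.sqrt N + c2 * Real.sqrt (∑ i, z i ^ 2)
        + c3 * Real.sqrt (∑ i, y i ^ 2) := by
        rw [norm_smul, norm_smul, norm_smul, hone, hnorm, hnorm]
        simp [Real.norm_eq_abs, abs_of_nonneg hA, abs_of_nonneg hc2, abs_of_nonneg hc3]

open RealInnerProductSpace in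
private lemma sum_le_sqrt_card (N : ℕ) (z : Fin N → ℝ) :
    ∑ i, z i ≤ Real.sqrt N * Real.sqrt (∑ i, z i ^ 2) := by
  have hnorm : ∀ g : Fin N → ℝ, ‖(WithLp.equiv 2 (Fin N → ℝ)).symm g‖
      = Real.sqrt (∑ i, g i ^ 2) := by
    intro g
    rw [EuclideanSpace.norm_eq]
    simp [WithLp.equiv_symm_apply, PiLp.toLp_apply, sq_abs]
  have hone : ‖(WithLp.equiv 2 (Fin N → ℝ)).symm (fun _ => (1:ℝ))‖ = Real.sqrt N := by
    rw [hnorm]; simp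
  have hinner : ⟪(WithLp.equiv 2 (Fin N → ℝ)).symm (fun _ => (1:ℝ)),
      (WithLp.equiv 2 (Fin N → ℝ)).symm z⟫ = ∑ i, z i := by
    simp [PiLp.inner_apply, WithLp.equiv_symm_apply, PiLp.toLp_apply]
  calc ∑ i, z i = ⟪(WithLp.equiv 2 (Fin N → ℝ)).symm (fun _ => (1:ℝ)),
        (WithLp.equiv 2 (Fin N → ℝ)).symm z⟫ := hinner.symm
    _ ≤ |⟪(WithLp.equiv 2 (Fin N → ℝ)).symm (fun _ => (1:ℝ)),
        (WithLp.equiv 2 (Fin N → ℝ)).symm z⟫| := le_abs_self _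
    _ ≤ ‖(WithLp.equiv 2 (Fin N → ℝ)).symm (fun _ => (1:ℝ))‖
        * ‖(WithLp.equiv 2 (Fin N → ℝ)).symm z‖ := abs_real_inner_le_norm _ _
    _ = Real.sqrt N * Real.sqrt (∑ i, z i ^ 2) := by rw [hone, hnorm]

set_option maxHeartbeats 1000000 in
private lemma stmt12_key (N : ℕ) (hN : 1 ≤ N) (τ k ξ ζ : ℝ)
    (hk : 0 ≤ k) (hξ : 0 ≤ ξ) (hζ : 0 ≤ ζ)
    (hreg : 1 ≤ ξ ∨ 0 < ζ)
    (x y : Fin N → ℝ)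
    (hx : ∀ i, x i ∈ Set.Icc (0 : ℝ) 1) (hy : ∀ i, y i ∈ Set.Icc (0 : ℝ) 1)
    (hst : (∑ j, y j) ≤ (∑ j, x j)) :
      Real.sqrt (∑ i,
        (((τ + (k / (ξ + 1)) * ((∑ j, x j) / N + ζ) ^ (ξ + 1)) +
            (1 / N) * x i * (k * ((∑ j, x j) / N + ζ) ^ ξ)) -
         ((τ + (k / (ξ + 1)) * ((∑ j, y j) / N + ζ) ^ (ξ + 1)) +
            (1 / N) * y i * (k * ((∑ j, y j) / N + ζ) ^ ξ))) ^ 2)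
      ≤ (2 * k / N) * ((1 + N) * (1 + ζ) ^ ξ + ξ * (1 + ζ) ^ (ξ - 1)) *
          Real.sqrt (∑ i, (x i - y i) ^ 2) := by
  have hN0 : (0 : ℝ) < N := by exact_mod_cast Nat.pos_of_ne_zero (by omega)
  have hN1 : (1 : ℝ) ≤ N := by exact_mod_cast hN
  -- abbreviations (opaque variables, no lets)
  obtain ⟨S, hS⟩ : ∃ S : ℝ, (∑ j, x j) = S := ⟨_, rfl⟩
  obtain ⟨Sy, hSy⟩ : ∃ Sy : ℝ, (∑ j, y j) = Sy := ⟨_, rfl⟩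
  rw [hS, hSy] at hst ⊢
  obtain ⟨s, hs⟩ : ∃ s : ℝ, S / N = s := ⟨_, rfl⟩
  obtain ⟨t, ht⟩ : ∃ t : ℝ, Sy / N = t := ⟨_, rfl⟩
  rw [hs, ht]
  obtain ⟨nw, hnw⟩ : ∃ nw : ℝ, Real.sqrt (∑ i, (x i - y i) ^ 2) = nw := ⟨_, rfl⟩
  obtain ⟨nu, hnu⟩ : ∃ nu : ℝ, Real.sqrt (∑ i, (y i) ^ 2) = nu := ⟨_, rfl⟩
  rw [hnw]
  -- basic facts
  have hS0 : 0 ≤ S := hS ▸ Finset.sum_nonneg fun i _ => (hx i).1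
  have hSy0 : 0 ≤ Sy := hSy ▸ Finset.sum_nonneg fun i _ => (hy i).1
  have hS1 : S ≤ N := by
    rw [← hS]
    calc (∑ j, x j) ≤ ∑ _j : Fin N, (1 : ℝ) := Finset.sum_le_sum fun i _ => (hx i).2
    _ = N := by simp
  have hSy1 : Sy ≤ N := by
    rw [← hSy]
    calc (∑ j, y j) ≤ ∑ _j : Fin N, (1 : ℝ) := Finset.sum_le_sum fun i _ => (hy i).2
    _ = N := by simp
  have hs0 : 0 ≤ s := hs ▸ div_nonneg hS0 hN0.le
  have ht0 : 0 ≤ t := ht ▸ div_nonneg hSy0 hN0.le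
  have hs1 : s ≤ 1 := hs ▸ (div_le_one hN0).2 hS1
  have ht1 : t ≤ 1 := ht ▸ (div_le_one hN0).2 hSy1
  have hts : t ≤ s := by rw [← hs, ← ht]; gcongr
  have hSNs : S = N * s := by rw [← hs]; field_simp
  have hSyNt : Sy = N * t := by rw [← ht]; field_simp
  -- basic rpow facts
  have htζ0 : 0 ≤ t + ζ := by linarith
  have hsζ0 : 0 ≤ s + ζ := by linarith
  have h1ζ0 : (0:ℝ) ≤ 1 + ζ := by linarith
  have hfs_nonneg : 0 ≤ (s + ζ) ^ ξ := Real.rpow_nonneg hsζ0 ξ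
  have hft_le_fs : (t + ζ) ^ ξ ≤ (s + ζ) ^ ξ := Real.rpow_le_rpow htζ0 (by linarith) hξ
  have hfs_le : (s + ζ) ^ ξ ≤ (1 + ζ) ^ ξ := Real.rpow_le_rpow hsζ0 (by linarith) hξ
  have hP0 : 0 ≤ (1 + ζ) ^ ξ := Real.rpow_nonneg h1ζ0 ξ
  have hP1 : 1 ≤ (1 + ζ) ^ ξ := Real.one_le_rpow (by linarith) hξ
  have hQ0 : 0 ≤ (1 + ζ) ^ (ξ - 1) := Real.rpow_nonneg h1ζ0 (ξ - 1)
  have hgg : (t + ζ) ^ (ξ + 1) ≤ (s + ζ) ^ (ξ + 1) :=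
    Real.rpow_le_rpow htζ0 (by linarith) (by linarith)
  -- sqrt N facts
  have hsqN0 : 0 ≤ Real.sqrt N := Real.sqrt_nonneg N
  have hsqNsq : Real.sqrt N * Real.sqrt N = N := Real.mul_self_sqrt hN0.le
  have hsqN1 : (1:ℝ) ≤ Real.sqrt N := by
    rw [show (1:ℝ) = Real.sqrt 1 by simp]; exact Real.sqrt_le_sqrt hN1
  have hsqN_leN : Real.sqrt N ≤ N := by
    linarith [mul_le_mul_of_nonneg_right hsqN1 hsqN0, hsqNsq]
  -- norm bounds
  have hnw0 : 0 ≤ nw := hnw ▸ Real.sqrt_nonneg _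
  have hnu0 : 0 ≤ nu := hnu ▸ Real.sqrt_nonneg _
  have hnu_sqN : nu ≤ Real.sqrt N := by
    rw [← hnu]
    apply Real.sqrt_le_sqrt
    calc (∑ i, (y i) ^ 2) ≤ ∑ _i : Fin N, (1:ℝ) :=
          Finset.sum_le_sum fun i _ => by
            rw [sq]
            calc y i * y i ≤ 1 * 1 :=
                  mul_le_mul (hy i).2 (hy i).2 (hy i).1 zero_le_one
              _ = 1 := by ring
      _ = N := by simp
  have hnu_sqSy : nu ≤ Real.sqrt Sy := by
    rw [← hnu, ← hSy]
    apply Real.sqrt_le_sqrt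
    refine Finset.sum_le_sum fun i _ => ?_
    rw [sq]
    calc y i * y i ≤ y i * 1 := mul_le_mul_of_nonneg_left (hy i).2 (hy i).1
      _ = y i := mul_one _
  have hnu_Sy : nu ≤ Sy := by
    rw [← hnu]
    have h1 : ∑ i, (y i) ^ 2 ≤ Sy ^ 2 := by
      rw [← hSy]
      calc ∑ i, (y i) ^ 2 ≤ ∑ i, y i * (∑ j, y j) := by
            apply Finset.sum_le_sum
            intro i _
            have h := Finset.single_le_sum (f := y) (fun j _ => (hy j).1) (Finset.mem_univ i)
            rw [sq]
            exact mul_le_mul_of_nonneg_left h (hy i).1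
        _ = (∑ j, y j) ^ 2 := by rw [← Finset.sum_mul]; ring
    calc Real.sqrt (∑ i, (y i) ^ 2) ≤ Real.sqrt (Sy ^ 2) := Real.sqrt_le_sqrt h1
      _ = Sy := Real.sqrt_sq hSy0
  -- Cauchy-Schwarz
  have hcs : Real.sqrt N * (s - t) ≤ nw := by
    have h2 : S - Sy ≤ Real.sqrt N * nw := by
      have h := sum_le_sqrt_card N (fun i => x i - y i)
      rw [hnw, Finset.sum_sub_distrib, hS, hSy] at h
      exact h
    have h3 : s - t = (S - Sy) / N := by rw [← hs, ← ht]; ring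
    rw [h3]
    calc Real.sqrt N * ((S - Sy) / N) = (S - Sy) * (Real.sqrt N / N) := by ring
      _ ≤ (Real.sqrt N * nw) * (Real.sqrt N / N) := by
          apply mul_le_mul_of_nonneg_right h2 (by positivity)
      _ = nw * (Real.sqrt N * Real.sqrt N / N) := by ring
      _ = nw := by rw [hsqNsq]; field_simp
  have hstn : 0 ≤ s - t := by linarith
  -- coefficient bounds
  have hA0 : 0 ≤ k / (ξ + 1) * ((s + ζ) ^ (ξ + 1) - (t + ζ) ^ (ξ + 1)) :=
    mul_nonneg (div_nonneg hk (by linarith)) (by linarith)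
  have hc20 : 0 ≤ k / N * (s + ζ) ^ ξ := by positivity
  have hc30 : 0 ≤ k / N * ((s + ζ) ^ ξ - (t + ζ) ^ ξ) :=
    mul_nonneg (by positivity) (by linarith)
  have hAle : k / (ξ + 1) * ((s + ζ) ^ (ξ + 1) - (t + ζ) ^ (ξ + 1))
      ≤ k * (1 + ζ) ^ ξ * (s - t) := by
    have hmvt : (s + ζ) ^ (ξ + 1) - (t + ζ) ^ (ξ + 1) ≤
        ((ξ + 1) * (1 + ζ) ^ ξ) * ((s + ζ) - (t + ζ)) := by
      apply mvt_rpow' (by linarith) htζ0 (by linarith)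
      intro z hz1 hz2
      rw [add_sub_cancel_right]
      exact mul_le_mul_of_nonneg_left
        (Real.rpow_le_rpow (by linarith) (by linarith) hξ) (by linarith)
    rw [show (s + ζ) - (t + ζ) = s - t by ring] at hmvt
    calc k / (ξ + 1) * ((s + ζ) ^ (ξ + 1) - (t + ζ) ^ (ξ + 1))
        ≤ k / (ξ + 1) * (((ξ + 1) * (1 + ζ) ^ ξ) * (s - t)) := by
          apply mul_le_mul_of_nonneg_left hmvt (div_nonneg hk (by linarith))
      _ = k * (1 + ζ) ^ ξ * (s - t) := by field_simp
  -- third term bound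
  have hF : ((s + ζ) ^ ξ - (t + ζ) ^ ξ) * nu ≤
      ((1 + N) * (1 + ζ) ^ ξ + ξ * (1 + ζ) ^ (ξ - 1)) * (Real.sqrt N * (s - t)) := by
    rcases le_or_gt 1 ξ with hξ1 | hξ1
    · -- ξ ≥ 1
      have hmvt : (s + ζ) ^ ξ - (t + ζ) ^ ξ ≤ (ξ * (1 + ζ) ^ (ξ - 1)) * (s - t) := by
        have h := mvt_rpow' hξ htζ0 (by linarith : t + ζ ≤ s + ζ)
          (M := ξ * (1 + ζ) ^ (ξ - 1))
          (fun z hz1 hz2 => mul_le_mul_of_nonneg_left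
            (Real.rpow_le_rpow (by linarith) (by linarith) (by linarith)) hξ)
        rw [show s + ζ - (t + ζ) = s - t by ring] at h
        exact h
      calc ((s + ζ) ^ ξ - (t + ζ) ^ ξ) * nu
          ≤ ((ξ * (1 + ζ) ^ (ξ - 1)) * (s - t)) * Real.sqrt N :=
            mul_le_mul hmvt hnu_sqN hnu0 (mul_nonneg (by positivity) hstn)
        _ = (ξ * (1 + ζ) ^ (ξ - 1)) * (Real.sqrt N * (s - t)) := by ring
        _ ≤ ((1 + N) * (1 + ζ) ^ ξ + ξ * (1 + ζ) ^ (ξ - 1)) * (Real.sqrt N * (s - t)) := by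
            apply mul_le_mul_of_nonneg_right _ (mul_nonneg hsqN0 hstn)
            linarith [mul_nonneg (show (0:ℝ) ≤ 1 + (N:ℝ) by linarith) hP0]
    · -- ξ < 1, hence ζ > 0
      have hζ0 : 0 < ζ := hreg.resolve_left (not_le.mpr hξ1)
      have htζpos : 0 < t + ζ := by linarith
      have hmvt : (s + ζ) ^ ξ - (t + ζ) ^ ξ ≤ (ξ * (t + ζ) ^ (ξ - 1)) * (s - t) := by
        have h := mvt_rpow' hξ htζ0 (by linarith : t + ζ ≤ s + ζ)
          (M := ξ * (t + ζ) ^ (ξ - 1))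
          (fun z hz1 hz2 => mul_le_mul_of_nonneg_left
            (Real.rpow_le_rpow_of_nonpos htζpos hz1 (by linarith)) hξ)
        rw [show s + ζ - (t + ζ) = s - t by ring] at h
        exact h
      have htζQ0 : 0 ≤ (t + ζ) ^ (ξ - 1) := Real.rpow_nonneg htζ0 _
      have hid : (t + ζ) * (t + ζ) ^ (ξ - 1) = (t + ζ) ^ ξ := by
        have h := Real.rpow_add htζpos 1 (ξ - 1)
        rw [show (1:ℝ) + (ξ - 1) = ξ by ring, Real.rpow_one] at h
        rw [h]
      have hcore : ξ * (t + ζ) ^ (ξ - 1) * nu ≤ N * (1 + ζ) ^ ξ := by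
        rcases le_or_gt Sy 1 with hSyle | hSyle
        · -- small sum case
          calc ξ * (t + ζ) ^ (ξ - 1) * nu ≤ ξ * (t + ζ) ^ (ξ - 1) * (N * t) := by
                apply mul_le_mul_of_nonneg_left (hSyNt ▸ hnu_Sy) (by positivity)
            _ = ξ * N * (t * (t + ζ) ^ (ξ - 1)) := by ring
            _ ≤ ξ * N * ((t + ζ) * (t + ζ) ^ (ξ - 1)) := by
                apply mul_le_mul_of_nonneg_left _ (by positivity)
                apply mul_le_mul_of_nonneg_right (by linarith) htζQ0
            _ = ξ * N * (t + ζ) ^ ξ := by rw [hid]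
            _ ≤ 1 * N * (1 + ζ) ^ ξ := by
                apply mul_le_mul (mul_le_mul_of_nonneg_right hξ1.le hN0.le)
                  (Real.rpow_le_rpow htζ0 (by linarith) hξ)
                  (Real.rpow_nonneg htζ0 ξ) (by linarith)
            _ = N * (1 + ζ) ^ ξ := by ring
        · -- large sum case
          have htpos : 0 < t := by
            rw [← ht]; exact div_pos (by linarith) hN0
          have htN : 1 / (N:ℝ) ≤ t := by
            rw [← ht]
            exact (div_le_div_iff_of_pos_right hN0).mpr hSyle.le
          have hub : nu ≤ Real.sqrt N * Real.sqrt t := by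
            calc nu ≤ Real.sqrt Sy := hnu_sqSy
              _ = Real.sqrt N * Real.sqrt t := by rw [hSyNt, Real.sqrt_mul hN0.le]
          have htle : (t + ζ) ^ (ξ - 1) ≤ t ^ (ξ - 1) :=
            Real.rpow_le_rpow_of_nonpos htpos (by linarith) (by linarith)
          have hts2 : t ^ (ξ - 1) * Real.sqrt t = t ^ (ξ - 1/2) := by
            rw [Real.sqrt_eq_rpow, ← Real.rpow_add htpos]
            congr 1
            ring
          have hkey : t ^ (ξ - 1/2) ≤ Real.sqrt N := by
            rcases le_or_gt (1/2 : ℝ) ξ with h2 | h2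
            · exact le_trans (Real.rpow_le_one ht0 ht1 (by linarith)) hsqN1
            · have h3 : t ^ (ξ - 1/2) ≤ (1/(N:ℝ)) ^ (ξ - 1/2) :=
                Real.rpow_le_rpow_of_nonpos (by positivity) htN (by linarith)
              have h4 : (1/(N:ℝ)) ^ (ξ - 1/2) = (N:ℝ) ^ (-(ξ - 1/2)) := by
                rw [one_div, Real.inv_rpow hN0.le, ← Real.rpow_neg hN0.le]
              have h5 : (N:ℝ) ^ (-(ξ - 1/2)) ≤ (N:ℝ) ^ ((1:ℝ)/2) :=
                Real.rpow_le_rpow_of_exponent_le hN1 (by linarith)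
              have h6 : (N:ℝ) ^ ((1:ℝ)/2) = Real.sqrt N := by
                rw [Real.sqrt_eq_rpow]
              rw [h4] at h3
              linarith
          have ht12 : 0 ≤ t ^ (ξ - 1/2) := Real.rpow_nonneg htpos.le _
          calc ξ * (t + ζ) ^ (ξ - 1) * nu
              ≤ (ξ * t ^ (ξ - 1)) * (Real.sqrt N * Real.sqrt t) := by
                apply mul_le_mul (mul_le_mul_of_nonneg_left htle hξ) hub hnu0
                positivity
            _ = (ξ * Real.sqrt N) * (t ^ (ξ - 1) * Real.sqrt t) := by ring
            _ = (ξ * Real.sqrt N) * t ^ (ξ - 1/2) := by rw [hts2]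
            _ ≤ (1 * Real.sqrt N) * Real.sqrt N := by
                apply mul_le_mul (mul_le_mul_of_nonneg_right hξ1.le hsqN0) hkey ht12
                  (by positivity)
            _ = N := by rw [one_mul, hsqNsq]
            _ ≤ N * (1 + ζ) ^ ξ := le_mul_of_one_le_right hN0.le hP1
      calc ((s + ζ) ^ ξ - (t + ζ) ^ ξ) * nu
          ≤ ((ξ * (t + ζ) ^ (ξ - 1)) * (s - t)) * nu :=
            mul_le_mul_of_nonneg_right hmvt hnu0
        _ = (ξ * (t + ζ) ^ (ξ - 1) * nu) * (s - t) := by ring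
        _ ≤ (N * (1 + ζ) ^ ξ) * (s - t) := mul_le_mul_of_nonneg_right hcore hstn
        _ = (Real.sqrt N * (1 + ζ) ^ ξ) * (Real.sqrt N * (s - t)) := by
            have h9 : (Real.sqrt N * (1 + ζ) ^ ξ) * (Real.sqrt N * (s - t))
                = (Real.sqrt N * Real.sqrt N) * ((1 + ζ) ^ ξ * (s - t)) := by ring
            rw [h9, hsqNsq]
            ring
        _ ≤ ((1 + N) * (1 + ζ) ^ ξ + ξ * (1 + ζ) ^ (ξ - 1)) * (Real.sqrt N * (s - t)) := by
            apply mul_le_mul_of_nonneg_right _ (mul_nonneg hsqN0 hstn)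
            linarith [mul_le_mul_of_nonneg_right
              (show Real.sqrt N ≤ 1 + (N:ℝ) by linarith) hP0,
              mul_nonneg hξ hQ0]
  -- assemble
  have htri := norm_decomp N
    (k / (ξ + 1) * ((s + ζ) ^ (ξ + 1) - (t + ζ) ^ (ξ + 1)))
    (k / N * (s + ζ) ^ ξ) (k / N * ((s + ζ) ^ ξ - (t + ζ) ^ ξ))
    hA0 hc20 hc30
    (fun i => ((τ + (k / (ξ + 1)) * (s + ζ) ^ (ξ + 1)) + (1 / N) * x i * (k * (s + ζ) ^ ξ)) -
        ((τ + (k / (ξ + 1)) * (t + ζ) ^ (ξ + 1)) + (1 / N) * y i * (k * (t + ζ) ^ ξ)))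
    (fun i => x i - y i) y (fun i => by ring)
  rw [hnw, hnu] at htri
  refine le_trans htri ?_
  have hterm1 : k / (ξ + 1) * ((s + ζ) ^ (ξ + 1) - (t + ζ) ^ (ξ + 1)) * Real.sqrt N
      ≤ k * (1 + ζ) ^ ξ * nw := by
    calc k / (ξ + 1) * ((s + ζ) ^ (ξ + 1) - (t + ζ) ^ (ξ + 1)) * Real.sqrt N
        ≤ (k * (1 + ζ) ^ ξ * (s - t)) * Real.sqrt N :=
          mul_le_mul_of_nonneg_right hAle hsqN0
      _ = (k * (1 + ζ) ^ ξ) * (Real.sqrt N * (s - t)) := by ring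
      _ ≤ (k * (1 + ζ) ^ ξ) * nw := by
          apply mul_le_mul_of_nonneg_left hcs (by positivity)
  have hterm2 : k / N * (s + ζ) ^ ξ * nw ≤ k / N * (1 + ζ) ^ ξ * nw := by
    apply mul_le_mul_of_nonneg_right _ hnw0
    apply mul_le_mul_of_nonneg_left hfs_le (by positivity)
  have hterm3 : k / N * ((s + ζ) ^ ξ - (t + ζ) ^ ξ) * nu ≤
      k / N * ((1 + N) * (1 + ζ) ^ ξ + ξ * (1 + ζ) ^ (ξ - 1)) * nw := by
    have h1 : k / N * ((s + ζ) ^ ξ - (t + ζ) ^ ξ) * nu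
        = k / N * (((s + ζ) ^ ξ - (t + ζ) ^ ξ) * nu) := by ring
    rw [h1]
    calc k / N * (((s + ζ) ^ ξ - (t + ζ) ^ ξ) * nu)
        ≤ k / N * (((1 + N) * (1 + ζ) ^ ξ + ξ * (1 + ζ) ^ (ξ - 1)) * (Real.sqrt N * (s - t))) := by
          apply mul_le_mul_of_nonneg_left hF (by positivity)
      _ ≤ k / N * (((1 + N) * (1 + ζ) ^ ξ + ξ * (1 + ζ) ^ (ξ - 1)) * nw) := by
          apply mul_le_mul_of_nonneg_left _ (by positivity)
          apply mul_le_mul_of_nonneg_left hcs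
          linarith [mul_nonneg (show (0:ℝ) ≤ 1 + (N:ℝ) by linarith) hP0, mul_nonneg hξ hQ0]
      _ = k / N * ((1 + N) * (1 + ζ) ^ ξ + ξ * (1 + ζ) ^ (ξ - 1)) * nw := by ring
  have hfinal : k * (1 + ζ) ^ ξ + k / N * (1 + ζ) ^ ξ +
      k / N * ((1 + N) * (1 + ζ) ^ ξ + ξ * (1 + ζ) ^ (ξ - 1)) ≤
      2 * k / N * ((1 + N) * (1 + ζ) ^ ξ + ξ * (1 + ζ) ^ (ξ - 1)) := by
    have hkN : 0 ≤ k / N := by positivity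
    have hkey : 2 * k / N * ((1 + N) * (1 + ζ) ^ ξ + ξ * (1 + ζ) ^ (ξ - 1)) -
        (k * (1 + ζ) ^ ξ + k / N * (1 + ζ) ^ ξ +
          k / N * ((1 + N) * (1 + ζ) ^ ξ + ξ * (1 + ζ) ^ (ξ - 1)))
        = k / N * (ξ * (1 + ζ) ^ (ξ - 1)) := by
      field_simp
      ring
    linarith [mul_nonneg hkN (mul_nonneg hξ hQ0), hkey]
  calc k / (ξ + 1) * ((s + ζ) ^ (ξ + 1) - (t + ζ) ^ (ξ + 1)) * Real.sqrt N
        + k / N * (s + ζ) ^ ξ * nw + k / N * ((s + ζ) ^ ξ - (t + ζ) ^ ξ) * nu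
      ≤ k * (1 + ζ) ^ ξ * nw + k / N * (1 + ζ) ^ ξ * nw +
        k / N * ((1 + N) * (1 + ζ) ^ ξ + ξ * (1 + ζ) ^ (ξ - 1)) * nw := by
        linarith
    _ = (k * (1 + ζ) ^ ξ + k / N * (1 + ζ) ^ ξ +
        k / N * ((1 + N) * (1 + ζ) ^ ξ + ξ * (1 + ζ) ^ (ξ - 1))) * nw := by ring
    _ ≤ 2 * k / N * ((1 + N) * (1 + ζ) ^ ξ + ξ * (1 + ζ) ^ (ξ - 1)) * nw :=
        mul_le_mul_of_nonneg_right hfinal hnw0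

/-- The per-edge game mapping
`T(y)_i = ℓ(avg y) + (1/N) y_i ℓ'(avg y)` with `ℓ(σ) = τ + (k/(ξ+1))(σ+ζ)^{ξ+1}`
and `ℓ'(σ) = k(σ+ζ)^ξ` is Lipschitz on `[0,1]^N` (Euclidean norm) with constant
`L = (2k/N)((1+N)(1+ζ)^ξ + ξ(1+ζ)^{ξ−1})`, provided `ξ ≥ 1` or `ζ > 0`. -/
theorem stmt_12 (N : ℕ) (hN : 1 ≤ N) (τ k ξ ζ : ℝ)
    (hτ : 0 ≤ τ) (hk : 0 ≤ k) (hξ : 0 ≤ ξ) (hζ : 0 ≤ ζ)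
    (hreg : 1 ≤ ξ ∨ 0 < ζ) :
    ∀ x y : Fin N → ℝ,
      (∀ i, x i ∈ Set.Icc (0 : ℝ) 1) → (∀ i, y i ∈ Set.Icc (0 : ℝ) 1) →
      Real.sqrt (∑ i,
        (((τ + (k / (ξ + 1)) * ((∑ j, x j) / N + ζ) ^ (ξ + 1)) +
            (1 / N) * x i * (k * ((∑ j, x j) / N + ζ) ^ ξ)) -
         ((τ + (k / (ξ + 1)) * ((∑ j, y j) / N + ζ) ^ (ξ + 1)) +
            (1 / N) * y i * (k * ((∑ j, y j) / N + ζ) ^ ξ))) ^ 2)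
      ≤ (2 * k / N) * ((1 + N) * (1 + ζ) ^ ξ + ξ * (1 + ζ) ^ (ξ - 1)) *
          Real.sqrt (∑ i, (x i - y i) ^ 2) := by
  intro x y hx hy
  rcases le_total (∑ j, y j) (∑ j, x j) with h | h
  · exact stmt12_key N hN τ k ξ ζ hk hξ hζ hreg x y hx hy h
  · have key := stmt12_key N hN τ k ξ ζ hk hξ hζ hreg y x hy hx h
    have e1 : ∀ a b : ℝ, (a - b) ^ 2 = (b - a) ^ 2 := fun a b => by ring
    calc Real.sqrt (∑ i,
        (((τ + (k / (ξ + 1)) * ((∑ j, x j) / N + ζ) ^ (ξ + 1)) +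
            (1 / N) * x i * (k * ((∑ j, x j) / N + ζ) ^ ξ)) -
         ((τ + (k / (ξ + 1)) * ((∑ j, y j) / N + ζ) ^ (ξ + 1)) +
            (1 / N) * y i * (k * ((∑ j, y j) / N + ζ) ^ ξ))) ^ 2)
        = Real.sqrt (∑ i,
        (((τ + (k / (ξ + 1)) * ((∑ j, y j) / N + ζ) ^ (ξ + 1)) +
            (1 / N) * y i * (k * ((∑ j, y j) / N + ζ) ^ ξ)) -
         ((τ + (k / (ξ + 1)) * ((∑ j, x j) / N + ζ) ^ (ξ + 1)) +
            (1 / N) * x i * (k * ((∑ j, x j) / N + ζ) ^ ξ))) ^ 2) := by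
          congr 1; exact Finset.sum_congr rfl fun i _ => e1 _ _
      _ ≤ (2 * k / N) * ((1 + N) * (1 + ζ) ^ ξ + ξ * (1 + ζ) ^ (ξ - 1)) *
          Real.sqrt (∑ i, (y i - x i) ^ 2) := key
      _ = (2 * k / N) * ((1 + N) * (1 + ζ) ^ ξ + ξ * (1 + ζ) ^ (ξ - 1)) *
          Real.sqrt (∑ i, (x i - y i) ^ 2) := by
          congr 2; exact Finset.sum_congr rfl fun i _ => e1 _ _
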